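/- Let n ≥ 1 and let T be a closable linear operator on a Hilbert space. Then Tⁿ is self-adjoint if and only if Tⁿ = (T*)ⁿ and σ(Tⁿ) ≠ ℂ. -/

import Mathlib

open LinearPMap

set_option linter.unusedSectionVars false

noncomputable section

section BanachDefs

variable {H : Type*} [NormedAddCommGroup H] [NormedSpace ℂ H]

/-- Composition `g ∘ f` of unbounded operators, with the natural (maximal) domain
`{x ∈ dom f : f x ∈ dom g}`. -/
def LinearPMap.pComp (g f : H →ₗ.[ℂ] H) : H →ₗ.[ℂ] H where
  domain := (g.domain.comap f.toFun).map f.domain.subtype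
  toFun := g.toFun ∘ₗ (f.toFun.restrict (p := g.domain.comap f.toFun) (q := g.domain)
      (fun _ hx => hx)) ∘ₗ
    ((Submodule.equivMapOfInjective f.domain.subtype (Submodule.injective_subtype _)
      (g.domain.comap f.toFun)).symm).toLinearMap

/-- `n`-th power of an unbounded operator; `T^0` is the identity on all of `H`. -/
def LinearPMap.pPow (T : H →ₗ.[ℂ] H) : ℕ → (H →ₗ.[ℂ] H)
  | 0 => (LinearMap.id : H →ₗ[ℂ] H).toPMap ⊤
  | n + 1 => T.pComp (T.pPow n)

theorem LinearPMap.pPow_domain_succ_le (T : H →ₗ.[ℂ] H) (n : ℕ) :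
    (T.pPow (n + 1)).domain ≤ (T.pPow n).domain := by
  intro x hx
  simp_rw [pPow, pComp] at hx
  obtain ⟨y, -, rfl⟩ := hx
  exact y.2

theorem LinearPMap.pPow_domain_le (T : H →ₗ.[ℂ] H) {i n : ℕ} (h : i ≤ n) :
    (T.pPow n).domain ≤ (T.pPow i).domain := by
  induction n with
  | zero => exact Nat.le_zero.mp h ▸ le_rfl
  | succ n ih =>
    rcases Nat.lt_succ_iff_lt_or_eq.mp (Nat.lt_succ_of_le h) with h' | rfl
    · exact le_trans (T.pPow_domain_succ_le n) (ih (Nat.lt_succ_iff.mp h'))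
    · exact le_rfl

/-- `p(T)` for a complex polynomial `p`, defined on `D(T^n)` where `n = deg p`. -/
def LinearPMap.polyApp (p : Polynomial ℂ) (T : H →ₗ.[ℂ] H) : H →ₗ.[ℂ] H where
  domain := (T.pPow p.natDegree).domain
  toFun := ∑ i ∈ (Finset.range (p.natDegree + 1)).attach,
    p.coeff i.1 • ((T.pPow i.1).toFun ∘ₗ Submodule.inclusion
      (T.pPow_domain_le (Nat.lt_succ_iff.mp (Finset.mem_range.mp i.2))))

/-- `A - μ • I` with domain `dom A`. -/
def LinearPMap.subConst (A : H →ₗ.[ℂ] H) (μ : ℂ) : H →ₗ.[ℂ] H :=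
  ⟨A.domain, A.toFun - μ • A.domain.subtype⟩

/-- An unbounded operator is boundedly invertible if it is bijective from its domain onto `H`
with an everywhere-defined bounded (continuous) inverse. -/
def LinearPMap.IsBddInvertible (A : H →ₗ.[ℂ] H) : Prop :=
  ∃ B : H →L[ℂ] H, (∀ y : H, ∃ hy : B y ∈ A.domain, A ⟨B y, hy⟩ = y) ∧
    ∀ x : A.domain, B (A x) = (x : H)

/-- The spectrum of an unbounded operator: `μ ∉ σ(A)` iff `A - μI` is bijective with a
bounded everywhere-defined inverse. -/
def LinearPMap.pSpectrum (A : H →ₗ.[ℂ] H) : Set ℂ :=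
  {μ | ¬ (A.subConst μ).IsBddInvertible}

/-- The kernel of an unbounded operator, as a subset of `H`. -/
def LinearPMap.pKer (A : H →ₗ.[ℂ] H) : Set H :=
  {x | ∃ hx : x ∈ A.domain, A ⟨x, hx⟩ = 0}

/-- The range of an unbounded operator. -/
def LinearPMap.pRan (A : H →ₗ.[ℂ] H) : Set H :=
  Set.range fun x : A.domain => A x

/-- A bounded everywhere-defined operator seen as an unbounded operator. -/
def ContinuousLinearMap.toPMapTop (B : H →L[ℂ] H) : H →ₗ.[ℂ] H :=
  (B : H →ₗ[ℂ] H).toPMap ⊤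

end BanachDefs

section HilbertDefs

variable {H : Type*} [NormedAddCommGroup H] [InnerProductSpace ℂ H] [CompleteSpace H]

/-- A densely defined closed operator is quasinormal if `T T* T = T* T T`. -/
def LinearPMap.IsQuasinormal (T : H →ₗ.[ℂ] H) : Prop :=
  T.IsClosed ∧ Dense (T.domain : Set H) ∧
    T.pComp (T.adjoint.pComp T) = T.adjoint.pComp (T.pComp T)

/-- A densely defined closed operator is normal if `T* T = T T*` (an equality of unbounded
operators, domains included). -/
def LinearPMap.IsNormal (T : H →ₗ.[ℂ] H) : Prop :=
  T.IsClosed ∧ Dense (T.domain : Set H) ∧ T.adjoint.pComp T = T.pComp T.adjoint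

/-- A symmetric (not necessarily densely defined) operator. -/
def LinearPMap.IsSymm (T : H →ₗ.[ℂ] H) : Prop :=
  ∀ x y : T.domain, inner ℂ (T x) (y : H) = (inner ℂ (x : H) (T y) : ℂ)

/-- A paranormal operator: `‖Tx‖² ≤ ‖T²x‖ ‖x‖` for every `x ∈ D(T²)`. -/
def LinearPMap.IsParanormal (T : H →ₗ.[ℂ] H) : Prop :=
  ∀ (x : H) (hx : x ∈ T.domain) (hTx : T ⟨x, hx⟩ ∈ T.domain),
    ‖T ⟨x, hx⟩‖ ^ 2 ≤ ‖T ⟨T ⟨x, hx⟩, hTx⟩‖ * ‖x‖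

end HilbertDefs

end

section Aux1

open Polynomial Finset

variable {H : Type*} [NormedAddCommGroup H] [NormedSpace ℂ H]

namespace LinearPMap

theorem mem_pComp_domain {g f : H →ₗ.[ℂ] H} {x : H} :
    x ∈ (g.pComp f).domain ↔ ∃ hx : x ∈ f.domain, f ⟨x, hx⟩ ∈ g.domain := by
  constructor
  · rintro ⟨⟨y, hy⟩, hmem, rfl⟩
    exact ⟨hy, hmem⟩
  · rintro ⟨hx, hfx⟩
    exact ⟨⟨x, hx⟩, hfx, rfl⟩

theorem pComp_apply {g f : H →ₗ.[ℂ] H} {x : H} (hm : x ∈ (g.pComp f).domain)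
    (hx : x ∈ f.domain) (hfx : f ⟨x, hx⟩ ∈ g.domain) :
    (g.pComp f) ⟨x, hm⟩ = g ⟨f ⟨x, hx⟩, hfx⟩ := by
  set e := Submodule.equivMapOfInjective f.domain.subtype (Submodule.injective_subtype _)
      (g.domain.comap f.toFun) with he
  set y := e.symm ⟨x, hm⟩ with hy
  have h1 : ((y : f.domain) : H) = x := by
    have h := Submodule.map_equivMapOfInjective_symm_apply f.domain.subtype
      (Submodule.injective_subtype _) (g.domain.comap f.toFun) ⟨x, hm⟩
    exact h
  have h2 : (y : f.domain) = ⟨x, hx⟩ := Subtype.ext h1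
  show g.toFun ((f.toFun.restrict fun _ h => h) y) = _
  have h3 : f.toFun (y : f.domain) = f ⟨x, hx⟩ := congrArg f.toFun h2
  refine congrArg g.toFun (Subtype.ext ?_)
  rw [LinearMap.restrict_apply]
  exact h3

end LinearPMap

end Aux1
section Aux2

open Polynomial Finset

variable {H : Type*} [NormedAddCommGroup H] [NormedSpace ℂ H]

namespace LinearPMap

/-- Apply a partial linear map, with junk value `0` outside the domain. -/
noncomputable def aap (f : H →ₗ.[ℂ] H) (x : H) : H :=
  letI := Classical.dec (x ∈ f.domain)
  if h : x ∈ f.domain then f ⟨x, h⟩ else 0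

theorem aap_of_mem {f : H →ₗ.[ℂ] H} {x : H} (h : x ∈ f.domain) : aap f x = f ⟨x, h⟩ := by
  unfold aap
  exact dif_pos h

theorem aap_zero (f : H →ₗ.[ℂ] H) : aap f 0 = 0 := by
  rw [aap_of_mem (zero_mem f.domain)]
  exact f.map_zero

theorem aap_add {f : H →ₗ.[ℂ] H} {x y : H} (hx : x ∈ f.domain) (hy : y ∈ f.domain) :
    aap f (x + y) = aap f x + aap f y := by
  rw [aap_of_mem hx, aap_of_mem hy, aap_of_mem (add_mem hx hy)]
  exact f.map_add ⟨x, hx⟩ ⟨y, hy⟩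

theorem aap_smul {f : H →ₗ.[ℂ] H} {x : H} (c : ℂ) (hx : x ∈ f.domain) :
    aap f (c • x) = c • aap f x := by
  rw [aap_of_mem hx, aap_of_mem (Submodule.smul_mem _ c hx)]
  exact f.map_smul c ⟨x, hx⟩

theorem aap_sub {f : H →ₗ.[ℂ] H} {x y : H} (hx : x ∈ f.domain) (hy : y ∈ f.domain) :
    aap f (x - y) = aap f x - aap f y := by
  rw [aap_of_mem hx, aap_of_mem hy, aap_of_mem (sub_mem hx hy)]
  have : (⟨x - y, sub_mem hx hy⟩ : f.domain) = ⟨x, hx⟩ - ⟨y, hy⟩ := rfl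
  rw [this]
  exact f.toFun.map_sub ⟨x, hx⟩ ⟨y, hy⟩

theorem aap_sum {f : H →ₗ.[ℂ] H} {ι : Type*} [DecidableEq ι] (s : Finset ι) (g : ι → H)
    (hg : ∀ i ∈ s, g i ∈ f.domain) :
    aap f (∑ i ∈ s, g i) = ∑ i ∈ s, aap f (g i) := by
  induction s using Finset.induction with
  | empty => simpa using aap_zero f
  | @insert a s ha ih =>
    rw [Finset.sum_insert ha, Finset.sum_insert ha,
      aap_add (hg a (mem_insert_self a s)) (Submodule.sum_mem _ fun i hi => hg i (mem_insert_of_mem hi)),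
      ih fun i hi => hg i (mem_insert_of_mem hi)]

theorem aap_le_agree {f g : H →ₗ.[ℂ] H} (h : f ≤ g) {x : H} (hx : x ∈ f.domain) :
    aap g x = aap f x := by
  rw [aap_of_mem hx, aap_of_mem (h.1 hx)]
  exact (h.2 rfl).symm

/- pPow basic API (natural orientation: `T^(n+1) = T ∘ T^n`). -/

theorem pPow_zero_domain (T : H →ₗ.[ℂ] H) : (T.pPow 0).domain = ⊤ := rfl

theorem mem_pPow_zero (T : H →ₗ.[ℂ] H) (x : H) : x ∈ (T.pPow 0).domain :=
  Submodule.mem_top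

theorem aap_pPow_zero (T : H →ₗ.[ℂ] H) (x : H) : aap (T.pPow 0) x = x := by
  rw [aap_of_mem (mem_pPow_zero T x)]
  rfl

theorem mem_pPow_succ {T : H →ₗ.[ℂ] H} {n : ℕ} {x : H} :
    x ∈ (T.pPow (n + 1)).domain ↔
      ∃ hx : x ∈ (T.pPow n).domain, aap (T.pPow n) x ∈ T.domain := by
  constructor
  · intro h
    obtain ⟨hx, hfx⟩ := mem_pComp_domain.mp h
    exact ⟨hx, by rw [aap_of_mem hx]; exact hfx⟩
  · rintro ⟨hx, hfx⟩
    rw [aap_of_mem hx] at hfx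
    exact mem_pComp_domain.mpr ⟨hx, hfx⟩

theorem mem_pPow_succ_of {T : H →ₗ.[ℂ] H} {n : ℕ} {x : H} (hx : x ∈ (T.pPow n).domain)
    (hfx : aap (T.pPow n) x ∈ T.domain) : x ∈ (T.pPow (n + 1)).domain :=
  mem_pPow_succ.mpr ⟨hx, hfx⟩

theorem aap_pPow_succ {T : H →ₗ.[ℂ] H} {n : ℕ} {x : H} (h : x ∈ (T.pPow (n + 1)).domain) :
    aap (T.pPow (n + 1)) x = aap T (aap (T.pPow n) x) := by
  obtain ⟨hx, hfx⟩ := mem_pPow_succ.mp h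
  rw [aap_of_mem h, aap_of_mem hx, aap_of_mem (by rw [aap_of_mem hx] at hfx; exact hfx)]
  exact pComp_apply h hx (by rw [aap_of_mem hx] at hfx; exact hfx)

theorem mem_pPow_one {T : H →ₗ.[ℂ] H} {x : H} :
    x ∈ (T.pPow 1).domain ↔ x ∈ T.domain := by
  rw [mem_pPow_succ]
  constructor
  · rintro ⟨hx, h⟩
    rwa [aap_pPow_zero] at h
  · intro h
    exact ⟨mem_pPow_zero T x, by rwa [aap_pPow_zero]⟩

theorem mem_dom_of_pPow {T : H →ₗ.[ℂ] H} {n : ℕ} {x : H} (hn : 1 ≤ n)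
    (h : x ∈ (T.pPow n).domain) : x ∈ T.domain :=
  mem_pPow_one.mp (T.pPow_domain_le hn h)

theorem aap_pPow_one {T : H →ₗ.[ℂ] H} {x : H} (h : x ∈ T.domain) :
    aap (T.pPow 1) x = aap T x := by
  rw [aap_pPow_succ (mem_pPow_one.mpr h), aap_pPow_zero]

/- Reverse orientation: `T^(n+1) = T^n ∘ T`. -/

theorem pPow_succ'_aux (T : H →ₗ.[ℂ] H) (n : ℕ) :
    ∀ x : H, (x ∈ (T.pPow (n + 1)).domain ↔
        ∃ _ : x ∈ T.domain, aap T x ∈ (T.pPow n).domain) ∧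
      (x ∈ (T.pPow (n + 1)).domain →
        aap (T.pPow (n + 1)) x = aap (T.pPow n) (aap T x)) := by
  induction n with
  | zero =>
    intro x
    constructor
    · rw [mem_pPow_one]
      exact ⟨fun h => ⟨h, mem_pPow_zero T _⟩, fun ⟨h, _⟩ => h⟩
    · intro h
      rw [aap_pPow_one (mem_pPow_one.mp h), aap_pPow_zero]
  | succ n ih =>
    intro x
    constructor
    · constructor
      · intro h
        obtain ⟨hx, hfx⟩ := mem_pPow_succ.mp h
        obtain ⟨hx1, hx2⟩ := (ih x).1.mp hx
        refine ⟨hx1, mem_pPow_succ_of hx2 ?_⟩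
        rw [← (ih x).2 hx]
        exact hfx
      · rintro ⟨hx, hfx⟩
        obtain ⟨h1, h2⟩ := mem_pPow_succ.mp hfx
        have hxn : x ∈ (T.pPow (n + 1)).domain := (ih x).1.mpr ⟨hx, h1⟩
        refine mem_pPow_succ_of hxn ?_
        rw [(ih x).2 hxn]
        exact h2
    · intro h
      obtain ⟨hx, hfx⟩ := mem_pPow_succ.mp h
      obtain ⟨hx1, hx2⟩ := (ih x).1.mp hx
      have hTx : aap T x ∈ (T.pPow (n + 1)).domain := by
        refine mem_pPow_succ_of hx2 ?_
        rw [← (ih x).2 hx]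
        exact hfx
      rw [aap_pPow_succ h, (ih x).2 hx, ← aap_pPow_succ hTx]

theorem mem_pPow_succ' {T : H →ₗ.[ℂ] H} {n : ℕ} {x : H} :
    x ∈ (T.pPow (n + 1)).domain ↔
      ∃ _ : x ∈ T.domain, aap T x ∈ (T.pPow n).domain :=
  (pPow_succ'_aux T n x).1

theorem aap_pPow_succ' {T : H →ₗ.[ℂ] H} {n : ℕ} {x : H} (h : x ∈ (T.pPow (n + 1)).domain) :
    aap (T.pPow (n + 1)) x = aap (T.pPow n) (aap T x) :=
  (pPow_succ'_aux T n x).2 h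

theorem eig_chain {T : H →ₗ.[ℂ] H} {d : ℂ} {z : H} (hz : z ∈ T.domain)
    (he : aap T z = d • z) (k : ℕ) :
    z ∈ (T.pPow k).domain ∧ aap (T.pPow k) z = d ^ k • z := by
  induction k with
  | zero => exact ⟨mem_pPow_zero T z, by rw [aap_pPow_zero]; simp⟩
  | succ k ih =>
    obtain ⟨hk, hv⟩ := ih
    have hmem : aap (T.pPow k) z ∈ T.domain := by
      rw [hv]; exact Submodule.smul_mem _ _ hz
    refine ⟨mem_pPow_succ_of hk hmem, ?_⟩
    rw [aap_pPow_succ (mem_pPow_succ_of hk hmem), hv, aap_smul _ hz, he, smul_smul, ← pow_succ]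

end LinearPMap

end Aux2
section Aux3

open Polynomial Finset

variable {H : Type*} [NormedAddCommGroup H] [NormedSpace ℂ H]

namespace LinearPMap

theorem pap_mem {S : H →ₗ.[ℂ] H} {x : H} {j m : ℕ} (hx : x ∈ (S.pPow m).domain)
    (hj : j < m) : aap (S.pPow j) x ∈ S.domain := by
  have h1 : x ∈ (S.pPow (j + 1)).domain := S.pPow_domain_le hj hx
  obtain ⟨h2, h3⟩ := mem_pPow_succ.mp h1
  rwa [aap_of_mem h2, ← aap_of_mem h2] at h3

/-- Evaluation `p(S) x`, truncated at degree `m`. -/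
noncomputable def peval (S : H →ₗ.[ℂ] H) (m : ℕ) (p : Polynomial ℂ) (x : H) : H :=
  ∑ j ∈ Finset.range (m + 1), p.coeff j • aap (S.pPow j) x

theorem peval_mem {S : H →ₗ.[ℂ] H} {m : ℕ} {x : H} (h : x ∈ (S.pPow (m + 1)).domain)
    (p : Polynomial ℂ) : peval S m p x ∈ S.domain :=
  Submodule.sum_mem _ fun j hj =>
    Submodule.smul_mem _ _ (pap_mem h (Nat.lt_succ_of_le (Nat.lt_succ_iff.mp (mem_range.mp hj))))

/-- Key algebraic identity: `S (p(S) x) = ((X - a) * p)(S) x + a • p(S) x`. -/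
theorem aap_peval_mul {S : H →ₗ.[ℂ] H} {m : ℕ} {x : H} (h : x ∈ (S.pPow (m + 1)).domain)
    {p : Polynomial ℂ} (hp : p.natDegree ≤ m) (a : ℂ) :
    aap S (peval S m p x) = peval S (m + 1) ((X - C a) * p) x + a • peval S m p x := by
  have hL : aap S (peval S m p x) = ∑ j ∈ range (m + 1), p.coeff j • aap (S.pPow (j + 1)) x := by
    rw [peval, aap_sum _ _ (fun j hj => Submodule.smul_mem _ _
      (pap_mem h (Nat.lt_succ_of_le (Nat.lt_succ_iff.mp (mem_range.mp hj)))))]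
    refine sum_congr rfl fun j hj => ?_
    have hjm : j < m + 1 := mem_range.mp hj
    have hxj : x ∈ (S.pPow (j + 1)).domain := S.pPow_domain_le hjm h
    rw [aap_smul _ (pap_mem h hjm), aap_pPow_succ hxj]
  have hcoeff : ∀ j, ((X - C a) * p).coeff j = (X * p).coeff j - a * p.coeff j := by
    intro j
    rw [sub_mul, coeff_sub, coeff_C_mul]
  have e1 : peval S (m + 1) ((X - C a) * p) x
      = (∑ j ∈ range (m + 1), p.coeff j • aap (S.pPow (j + 1)) x) - a • peval S m p x := by
    rw [peval]
    have : ∀ j ∈ range (m + 2), ((X - C a) * p).coeff j • aap (S.pPow j) x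
        = (X * p).coeff j • aap (S.pPow j) x - a • (p.coeff j • aap (S.pPow j) x) := by
      intro j _
      rw [hcoeff, sub_smul, smul_smul]
    rw [sum_congr rfl this, Finset.sum_sub_distrib]
    congr 1
    · rw [Finset.sum_range_succ']
      simp only [coeff_X_mul, coeff_X_mul_zero, zero_smul, add_zero]
    · rw [← Finset.smul_sum, peval, Finset.sum_range_succ,
        coeff_eq_zero_of_natDegree_lt (Nat.lt_succ_of_le hp), zero_smul, add_zero]
  rw [hL, e1, sub_add_cancel]

/-- Monic upgrade: if `p(S) x ∈ D(S)` for monic `p` of degree `m` and `x ∈ D(S^m)`,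
then `x ∈ D(S^(m+1))`. -/
theorem mem_pPow_succ_of_peval {S : H →ₗ.[ℂ] H} {m : ℕ} {x : H}
    (hx : x ∈ (S.pPow m).domain) {p : Polynomial ℂ} (hm : p.Monic) (hdeg : p.natDegree = m)
    (hv : peval S m p x ∈ S.domain) : x ∈ (S.pPow (m + 1)).domain := by
  have hlow : ∀ j ∈ range m, p.coeff j • aap (S.pPow j) x ∈ S.domain := fun j hj =>
    Submodule.smul_mem _ _ (pap_mem hx (mem_range.mp hj))
  have hcm : p.coeff m = 1 := by
    have := hm.coeff_natDegree
    rwa [hdeg] at this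
  have hsum : peval S m p x = (∑ j ∈ range m, p.coeff j • aap (S.pPow j) x)
      + aap (S.pPow m) x := by
    rw [peval, Finset.sum_range_succ, hcm, one_smul]
  have : aap (S.pPow m) x ∈ S.domain := by
    have h2 : aap (S.pPow m) x = peval S m p x - ∑ j ∈ range m, p.coeff j • aap (S.pPow j) x := by
      rw [hsum]; abel
    rw [h2]
    exact sub_mem hv (Submodule.sum_mem _ hlow)
  exact mem_pPow_succ_of hx this

theorem peval_X_pow_sub_C {S : H →ₗ.[ℂ] H} {x : H} {n : ℕ}
    (hx : x ∈ (S.pPow n).domain) (μ : ℂ) :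
    peval S n (X ^ n - C μ) x = aap (S.pPow n) x - μ • x := by
  rw [peval]
  have : ∀ j ∈ range (n + 1), (X ^ n - C μ : Polynomial ℂ).coeff j • aap (S.pPow j) x
      = (if j = n then aap (S.pPow n) x else 0) - (if j = 0 then μ • x else 0) := by
    intro j hj
    simp only [coeff_sub, coeff_X_pow, coeff_C, sub_smul, ite_smul, one_smul, zero_smul]
    congr 1
    · split
      · next hjn => rw [hjn]
      · rfl
    · split
      · next hj0 => rw [hj0, aap_pPow_zero]
      · rfl
  rw [sum_congr rfl this, Finset.sum_sub_distrib, Finset.sum_ite_eq' (range (n + 1)),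
    Finset.sum_ite_eq' (range (n + 1))]
  simp [Nat.lt_succ_iff]

theorem list_prod_monic (l : List ℂ) : ((l.map fun a => X - C a).prod).Monic := by
  induction l with
  | nil => simpa using monic_one
  | cons a l ih =>
    rw [List.map_cons, List.prod_cons]
    exact (monic_X_sub_C a).mul ih

theorem list_prod_natDegree (l : List ℂ) :
    ((l.map fun a => X - C a).prod).natDegree = l.length := by
  induction l with
  | nil => simp
  | cons a l ih =>
    rw [List.map_cons, List.prod_cons, (monic_X_sub_C a).natDegree_mul (list_prod_monic l),
      natDegree_X_sub_C, ih, List.length_cons]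
    omega

/-- Solvability chain: if `(S - a)v = u` is solvable for each `a` in `l`, then
`(∏ (X - a))(S) x = u` is solvable. -/
theorem solv_chain (S : H →ₗ.[ℂ] H) (l : List ℂ)
    (hsol : ∀ a ∈ l, ∀ u : H, ∃ v, ∃ _ : v ∈ S.domain, aap S v = u + a • v) :
    ∀ u : H, ∃ x, ∃ _ : x ∈ (S.pPow l.length).domain,
      peval S l.length ((l.map fun a => X - C a).prod) x = u := by
  induction l with
  | nil =>
    intro u
    refine ⟨u, mem_pPow_zero S u, ?_⟩
    simp [peval, aap_pPow_zero]
  | cons a l ih =>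
    intro u
    obtain ⟨v, hv, hveq⟩ := hsol a List.mem_cons_self u
    obtain ⟨x, hx, hxeq⟩ := ih (fun b hb u' => hsol b (List.mem_cons_of_mem a hb) u') v
    have hx1 : x ∈ (S.pPow (l.length + 1)).domain :=
      mem_pPow_succ_of_peval hx (list_prod_monic l) (list_prod_natDegree l) (hxeq ▸ hv)
    have hkey := aap_peval_mul hx1 (le_of_eq (list_prod_natDegree l)) a
    rw [hxeq, hveq] at hkey
    have : peval S (l.length + 1) ((X - C a) * (l.map fun b => X - C b).prod) x = u :=
      add_right_cancel hkey.symm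
    refine ⟨x, ?_, ?_⟩
    · simpa [List.length_cons] using hx1
    · rw [List.map_cons, List.prod_cons, List.length_cons]
      exact this

end LinearPMap

end Aux3
section Aux4

open Polynomial Finset

variable {H : Type*} [NormedAddCommGroup H] [NormedSpace ℂ H]

namespace LinearPMap

theorem subConst_domain (A : H →ₗ.[ℂ] H) (μ : ℂ) : (A.subConst μ).domain = A.domain := rfl

theorem subConst_apply (A : H →ₗ.[ℂ] H) (μ : ℂ) {x : H} (hx : x ∈ A.domain) :
    (A.subConst μ) ⟨x, hx⟩ = A ⟨x, hx⟩ - μ • x := rfl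

theorem isBddInvertible_unpack {A : H →ₗ.[ℂ] H} {μ : ℂ} (h : (A.subConst μ).IsBddInvertible) :
    ∃ B : H →L[ℂ] H, (∀ u, B u ∈ A.domain) ∧ (∀ u, aap A (B u) - μ • B u = u)
      ∧ ∀ x, x ∈ A.domain → B (aap A x - μ • x) = x := by
  obtain ⟨B, hB1, hB2⟩ := h
  refine ⟨B, fun u => (hB1 u).1, fun u => ?_, fun x hx => ?_⟩
  · obtain ⟨hy, hval⟩ := hB1 u
    rw [subConst_apply A μ hy] at hval
    have hy' : B u ∈ A.domain := hy
    rw [aap_of_mem hy']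
    exact hval
  · have := hB2 ⟨x, hx⟩
    rwa [subConst_apply A μ hx, ← aap_of_mem hx] at this

section Core

variable {T : H →ₗ.[ℂ] H} {m : ℕ} {μ : ℂ} {B : H →L[ℂ] H}
variable (hB1 : ∀ u, B u ∈ (T.pPow (m + 1)).domain)
variable (hB2 : ∀ u, aap (T.pPow (m + 1)) (B u) - μ • B u = u)
variable (hB3 : ∀ x, x ∈ (T.pPow (m + 1)).domain → B (aap (T.pPow (m + 1)) x - μ • x) = x)

include hB1 hB2 hB3

/-- `B` commutes with `T` on the domain of `T`. -/
theorem comm_lemma : ∀ y ∈ T.domain, B y ∈ T.domain ∧ aap T (B y) = B (aap T y) := by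
  intro y hy
  set x := B y with hxdef
  have hxA : x ∈ (T.pPow (m + 1)).domain := hB1 y
  have hxT : x ∈ T.domain := mem_dom_of_pPow (Nat.le_add_left 1 m) hxA
  have hAx : aap (T.pPow (m + 1)) x = y + μ • x := by
    have := hB2 y
    rw [← hxdef] at this
    rw [← this]; abel
  have hTn_mem : aap (T.pPow (m + 1)) x ∈ T.domain := by
    rw [hAx]; exact add_mem hy (Submodule.smul_mem _ _ hxT)
  have hx1 : x ∈ (T.pPow (m + 2)).domain := mem_pPow_succ_of hxA hTn_mem
  have val1 : aap (T.pPow (m + 2)) x = aap T y + μ • aap T x := by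
    rw [aap_pPow_succ hx1, hAx, aap_add hy (Submodule.smul_mem _ _ hxT), aap_smul _ hxT]
  obtain ⟨hxT', hTx_mem⟩ := mem_pPow_succ'.mp hx1
  have val2 : aap (T.pPow (m + 2)) x = aap (T.pPow (m + 1)) (aap T x) := aap_pPow_succ' hx1
  have hfin : aap (T.pPow (m + 1)) (aap T x) - μ • aap T x = aap T y := by
    rw [← val2, val1]; abel
  have := hB3 (aap T x) hTx_mem
  rw [hfin] at this
  exact ⟨hxT, this.symm⟩

variable {d : ℂ} (hd : d ^ (m + 1) = μ)

include hd

theorem Tsub_inj : ∀ z ∈ T.domain, aap T z = d • z → z = 0 := by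
  intro z hz he
  obtain ⟨hk, hv⟩ := eig_chain hz he (m + 1)
  have h0 : aap (T.pPow (m + 1)) z - μ • z = 0 := by
    rw [hv, hd, sub_self]
  have := hB3 z hk
  rw [h0, B.map_zero] at this
  exact this.symm

end Core

/-- Synthetic division cofactor of `X^(m+1) - C (d^(m+1))` by `(X - C d)`. -/
noncomputable def qd (m : ℕ) (d : ℂ) : Polynomial ℂ :=
  ∑ i ∈ Finset.range (m + 1), X ^ i * (C d) ^ (m - i)

theorem qd_mul (m : ℕ) (d : ℂ) : (X - C d) * qd m d = X ^ (m + 1) - C (d ^ (m + 1)) := by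
  rw [mul_comm]
  unfold qd
  rw [C_pow]
  exact geom_sum₂_mul (X : Polynomial ℂ) (C d) (m + 1)

theorem qd_natDegree_le (m : ℕ) (d : ℂ) : (qd m d).natDegree ≤ m := by
  refine natDegree_sum_le_of_forall_le _ _ fun i hi => ?_
  have hi' : i ≤ m := Nat.lt_succ_iff.mp (Finset.mem_range.mp hi)
  calc (X ^ i * (C d) ^ (m - i) : Polynomial ℂ).natDegree
      ≤ (X ^ i : Polynomial ℂ).natDegree + ((C d) ^ (m - i) : Polynomial ℂ).natDegree :=
        natDegree_mul_le
    _ ≤ m := by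
        rw [natDegree_X_pow, ← C_pow, natDegree_C]
        omega

section Rd

variable (T : H →ₗ.[ℂ] H) (m : ℕ) (d : ℂ) (B : H →L[ℂ] H)
variable (hB1 : ∀ u, B u ∈ (T.pPow (m + 1)).domain)

/-- The candidate resolvent `(T - d)⁻¹ = q_d(T) ∘ B`. -/
noncomputable def Rmap : H →ₗ[ℂ] H where
  toFun u := peval T m (qd m d) (B u)
  map_add' u v := by
    show peval T m (qd m d) (B (u + v)) = peval T m (qd m d) (B u) + peval T m (qd m d) (B v)
    rw [B.map_add]
    unfold peval
    rw [← Finset.sum_add_distrib]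
    refine Finset.sum_congr rfl fun j hj => ?_
    have hj' : j ≤ m + 1 := by have := Finset.mem_range.mp hj; omega
    rw [aap_add (T.pPow_domain_le hj' (hB1 u)) (T.pPow_domain_le hj' (hB1 v)), smul_add]
  map_smul' c u := by
    show peval T m (qd m d) (B (c • u)) = c • peval T m (qd m d) (B u)
    rw [B.map_smul]
    unfold peval
    rw [Finset.smul_sum]
    refine Finset.sum_congr rfl fun j hj => ?_
    have hj' : j ≤ m + 1 := by have := Finset.mem_range.mp hj; omega
    rw [aap_smul _ (T.pPow_domain_le hj' (hB1 u)), smul_comm]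

theorem Rmap_mem : ∀ u, Rmap T m d B hB1 u ∈ T.domain := fun u =>
  peval_mem (hB1 u) _

end Rd

section Rd2

variable {T : H →ₗ.[ℂ] H} {m : ℕ} {μ d : ℂ} {B : H →L[ℂ] H}
variable (hB1 : ∀ u, B u ∈ (T.pPow (m + 1)).domain)
variable (hB2 : ∀ u, aap (T.pPow (m + 1)) (B u) - μ • B u = u)
variable (hB3 : ∀ x, x ∈ (T.pPow (m + 1)).domain → B (aap (T.pPow (m + 1)) x - μ • x) = x)
variable (hd : d ^ (m + 1) = μ)

include hB1 hB2 hd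

theorem Rmap_right : ∀ u, aap T (Rmap T m d B hB1 u) = u + d • Rmap T m d B hB1 u := by
  intro u
  have h := aap_peval_mul (hB1 u) (qd_natDegree_le m d) d
  have h2 : peval T (m + 1) ((X - C d) * qd m d) (B u) = u := by
    rw [qd_mul, hd, peval_X_pow_sub_C (hB1 u), hB2]
  show aap T (peval T m (qd m d) (B u)) = u + d • peval T m (qd m d) (B u)
  rw [h, h2]

include hB3

theorem Rmap_left : ∀ y ∈ T.domain, Rmap T m d B hB1 (aap T y - d • y) = y := by
  intro y hy
  set w := aap T y - d • y with hw
  set v := Rmap T m d B hB1 w with hv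
  have hvmem : v ∈ T.domain := Rmap_mem T m d B hB1 w
  have hright : aap T v = w + d • v := Rmap_right hB1 hB2 hd w
  have hδ : aap T (v - y) = d • (v - y) := by
    rw [aap_sub hvmem hy, hright, hw, smul_sub]
    abel
  have := Tsub_inj hB1 hB2 hB3 hd (v - y) (sub_mem hvmem hy) hδ
  have hvy : v = y := by
    have h' := sub_eq_zero.mp this
    exact h'
  exact hvy

end Rd2

end LinearPMap

end Aux4
section Aux5

open Polynomial Finset

variable {H : Type*} [NormedAddCommGroup H] [InnerProductSpace ℂ H] [CompleteSpace H]

namespace LinearPMap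

section RdCont

variable {T : H →ₗ.[ℂ] H} {m : ℕ} {μ d : ℂ} {B : H →L[ℂ] H}
variable (hclos : T.IsClosable)
variable (hB1 : ∀ u, B u ∈ (T.pPow (m + 1)).domain)
variable (hB2 : ∀ u, aap (T.pPow (m + 1)) (B u) - μ • B u = u)
variable (hB3 : ∀ x, x ∈ (T.pPow (m + 1)).domain → B (aap (T.pPow (m + 1)) x - μ • x) = x)
variable (hd : d ^ (m + 1) = μ)

include hclos hB1 hB2 hB3 hd

/-- From a graph-limit eigenpair `(z, d • z)` of `T`, conclude `z = 0`. -/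
theorem closure_eig_zero : ∀ z : H, z ∈ T.closure.domain → aap T.closure z = d • z → z = 0 := by
  intro z hz hez
  have hgr : ((z, d • z) : H × H) ∈ T.closure.graph := by
    rw [aap_of_mem hz] at hez
    have := T.closure.mem_graph ⟨z, hz⟩
    rwa [hez] at this
  have hgr2 : ((z, d • z) : H × H) ∈ _root_.closure (T.graph : Set (H × H)) := by
    rw [← hclos.graph_closure_eq_closure_graph] at hgr
    have : ((z, d • z) : H × H) ∈ (T.graph.topologicalClosure : Set (H × H)) := hgr
    rwa [Submodule.topologicalClosure_coe] at this
  obtain ⟨g, hgmem, hgtend⟩ := mem_closure_iff_seq_limit.mp hgr2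
  have hyk : ∀ k, ∃ y : T.domain, ((y : H), T y) = g k := fun k => by
    obtain ⟨y, hy1, hy2⟩ := (T.mem_graph_iff).mp (hgmem k)
    exact ⟨y, by rw [hy1, hy2]⟩
  choose y hy using hyk
  have hy1 : Filter.Tendsto (fun k => ((y k : H))) Filter.atTop (nhds z) := by
    have h := (continuous_fst.tendsto _).comp hgtend
    have hfun : (Prod.fst ∘ g) = fun k => (y k : H) := funext fun k => by
      show (g k).1 = _
      rw [← hy k]
    rwa [hfun] at h
  have hy2 : Filter.Tendsto (fun k => T (y k)) Filter.atTop (nhds (d • z)) := by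
    have h := (continuous_snd.tendsto _).comp hgtend
    have hfun : (Prod.snd ∘ g) = fun k => T (y k) := funext fun k => by
      show (g k).2 = _
      rw [← hy k]
    rwa [hfun] at h
  have hcomm := comm_lemma hB1 hB2 hB3
  have hBy1 : Filter.Tendsto (fun k => B (y k : H)) Filter.atTop (nhds (B z)) :=
    (B.continuous.tendsto _).comp hy1
  have hBy2 : Filter.Tendsto (fun k => aap T (B (y k : H))) Filter.atTop (nhds (B (d • z))) := by
    have he : ∀ k, aap T (B (y k : H)) = B (T (y k)) := fun k => by
      rw [(hcomm (y k : H) (y k).2).2, aap_of_mem (y k).2]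
    simp only [he]
    exact (B.continuous.tendsto _).comp hy2
  have hpair : ((B z, B (d • z)) : H × H) ∈ _root_.closure (T.graph : Set (H × H)) := by
    refine mem_closure_of_tendsto (hBy1.prodMk_nhds hBy2) ?_
    filter_upwards with k
    have h1 : B (y k : H) ∈ T.domain := (hcomm (y k : H) (y k).2).1
    have := T.mem_graph ⟨B (y k : H), h1⟩
    rwa [← aap_of_mem h1] at this
  have hpair2 : ((B z, B (d • z)) : H × H) ∈ T.closure.graph := by
    rw [← hclos.graph_closure_eq_closure_graph]
    show ((B z, B (d • z)) : H × H) ∈ (T.graph.topologicalClosure : Set (H × H))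
    rwa [Submodule.topologicalClosure_coe]
  obtain ⟨w, hw1, hw2⟩ := (T.closure.mem_graph_iff).mp hpair2
  have hBzT : B z ∈ T.domain := mem_dom_of_pPow (Nat.le_add_left 1 m) (hB1 z)
  have hle := T.le_closure
  have hTBz : aap T (B z) = d • B z := by
    have hval : aap T.closure (B z) = B (d • z) := by
      rw [aap_of_mem (hle.1 hBzT)]
      have heq : w = (⟨B z, hle.1 hBzT⟩ : T.closure.domain) := Subtype.ext hw1
      rw [← heq, hw2]
    rw [aap_le_agree hle hBzT] at hval
    rw [hval, B.map_smul]
  have hBz0 : B z = 0 := Tsub_inj hB1 hB2 hB3 hd (B z) hBzT hTBz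
  have hz2 := hB2 z
  rw [hBz0, aap_zero, smul_zero, sub_zero] at hz2
  exact hz2.symm

/-- The resolvent `R_d` is continuous. -/
theorem Rmap_cont : Continuous (Rmap T m d B hB1) := by
  apply LinearMap.continuous_of_seq_closed_graph
  intro uu u w huu hRuu
  have hv1 : Filter.Tendsto (fun k => Rmap T m d B hB1 (uu k)) Filter.atTop (nhds w) := hRuu
  have hv2 : Filter.Tendsto (fun k => aap T (Rmap T m d B hB1 (uu k))) Filter.atTop
      (nhds (u + d • w)) := by
    have he : ∀ k, aap T (Rmap T m d B hB1 (uu k)) = uu k + d • Rmap T m d B hB1 (uu k) :=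
      fun k => Rmap_right hB1 hB2 hd (uu k)
    simp only [he]
    exact huu.add (hv1.const_smul d)
  have hpair : ((w, u + d • w) : H × H) ∈ _root_.closure (T.graph : Set (H × H)) := by
    refine mem_closure_of_tendsto (hv1.prodMk_nhds hv2) ?_
    filter_upwards with k
    have h1 : Rmap T m d B hB1 (uu k) ∈ T.domain := Rmap_mem T m d B hB1 (uu k)
    have := T.mem_graph ⟨_, h1⟩
    rwa [← aap_of_mem h1] at this
  have hpair2 : ((w, u + d • w) : H × H) ∈ T.closure.graph := by
    rw [← hclos.graph_closure_eq_closure_graph]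
    show ((w, u + d • w) : H × H) ∈ (T.graph.topologicalClosure : Set (H × H))
    rwa [Submodule.topologicalClosure_coe]
  obtain ⟨w', hw1, hw2⟩ := (T.closure.mem_graph_iff).mp hpair2
  have hle := T.le_closure
  set r := Rmap T m d B hB1 u with hr
  have hrmem : r ∈ T.domain := Rmap_mem T m d B hB1 u
  have hwmem : w ∈ T.closure.domain := by
    have := w'.2
    rw [hw1] at this
    exact this
  have hwval : aap T.closure w = u + d • w := by
    rw [aap_of_mem hwmem]
    have heq : w' = (⟨w, hwmem⟩ : T.closure.domain) := Subtype.ext hw1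
    rw [← heq, hw2]
  have hrmem' : r ∈ T.closure.domain := hle.1 hrmem
  have hrval : aap T.closure r = u + d • r := by
    rw [aap_le_agree hle hrmem]
    exact Rmap_right hB1 hB2 hd u
  have hδ : aap T.closure (w - r) = d • (w - r) := by
    rw [aap_sub hwmem hrmem', hwval, hrval, smul_sub]
    abel
  have h0 := closure_eig_zero hclos hB1 hB2 hB3 hd (w - r) (sub_mem hwmem hrmem') hδ
  rwa [sub_eq_zero] at h0

end RdCont

end LinearPMap

end Aux5
section Aux6

open Polynomial Finset

variable {H : Type*} [NormedAddCommGroup H] [InnerProductSpace ℂ H] [CompleteSpace H]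

local notation "⟪" x ", " y "⟫" => @inner ℂ _ _ x y

namespace LinearPMap

section AdjSolv

variable {T : H →ₗ.[ℂ] H} {m : ℕ} {μ d : ℂ} {B : H →L[ℂ] H}
variable (hdense : Dense (T.domain : Set H))
variable (hclos : T.IsClosable)
variable (hB1 : ∀ u, B u ∈ (T.pPow (m + 1)).domain)
variable (hB2 : ∀ u, aap (T.pPow (m + 1)) (B u) - μ • B u = u)
variable (hB3 : ∀ x, x ∈ (T.pPow (m + 1)).domain → B (aap (T.pPow (m + 1)) x - μ • x) = x)

include hdense hclos hB1 hB2 hB3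

theorem adj_solv (hd : d ^ (m + 1) = μ) :
    ∀ u : H, ∃ x, ∃ _ : x ∈ T.adjoint.domain,
      aap T.adjoint x = u + (starRingEnd ℂ d) • x := by
  intro u
  set R : H →L[ℂ] H := ⟨Rmap T m d B hB1, Rmap_cont hclos hB1 hB2 hB3 hd⟩ with hR
  set x := ContinuousLinearMap.adjoint R u with hx
  have hRapp : ∀ w : H, R w = Rmap T m d B hB1 w := fun w => rfl
  have hkey : ∀ v : T.domain, ⟪u + (starRingEnd ℂ d) • x, (v : H)⟫ = ⟪x, T v⟫ := by
    intro v
    have h1 : ⟪x, T v⟫ = ⟪u, R (T v)⟫ := ContinuousLinearMap.adjoint_inner_left R (T v) u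
    have h2 : R (T v) = (v : H) + d • R (v : H) := by
      rw [hRapp, hRapp]
      have hl := Rmap_left hB1 hB2 hB3 hd (v : H) v.2
      have hsub : Rmap T m d B hB1 (aap T (v : H)) - d • Rmap T m d B hB1 (v : H) = (v : H) := by
        rw [← (Rmap T m d B hB1).map_smul, ← (Rmap T m d B hB1).map_sub]
        exact hl
      rw [aap_of_mem v.2] at hsub
      have h5 := sub_eq_iff_eq_add.mp hsub
      exact h5
    have h3 : ⟪u, R (T v)⟫ = ⟪u, (v : H)⟫ + d * ⟪u, R (v : H)⟫ := by
      rw [h2, inner_add_right, inner_smul_right]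
    have h4 : ⟪u, R (v : H)⟫ = ⟪x, (v : H)⟫ :=
      (ContinuousLinearMap.adjoint_inner_left R (v : H) u).symm
    rw [h1, h3, h4, inner_add_left, inner_smul_left, Complex.conj_conj]
  have hmem : x ∈ T.adjoint.domain :=
    mem_adjoint_domain_of_exists x ⟨u + (starRingEnd ℂ d) • x, hkey⟩
  refine ⟨x, hmem, ?_⟩
  rw [aap_of_mem hmem]
  exact adjoint_apply_eq hdense ⟨x, hmem⟩ hkey

theorem K_surj :
    ∀ u : H, ∃ x, ∃ _ : x ∈ (T.adjoint.pPow (m + 1)).domain,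
      aap (T.adjoint.pPow (m + 1)) x - (starRingEnd ℂ μ) • x = u := by
  set p : Polynomial ℂ := X ^ (m + 1) - C ((starRingEnd ℂ) μ) with hp
  have hmonic : p.Monic := monic_X_pow_sub_C _ (Nat.succ_ne_zero m)
  have hdeg : p.natDegree = m + 1 := natDegree_X_pow_sub_C
  have hsplits : p.Splits := IsAlgClosed.splits p
  have hcard : p.roots.card = m + 1 := by
    rw [(splits_iff_card_roots).mp hsplits, hdeg]
  set l := p.roots.toList with hl
  have hlen : l.length = m + 1 := by rw [hl, Multiset.length_toList, hcard]
  have hroot : ∀ a ∈ l, a ^ (m + 1) = (starRingEnd ℂ) μ := by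
    intro a ha
    have ha2 : a ∈ p.roots := by rwa [hl, Multiset.mem_toList] at ha
    have h := isRoot_of_mem_roots ha2
    rw [hp, IsRoot.def, eval_sub, eval_pow, eval_X, eval_C, sub_eq_zero] at h
    exact h
  have hsol : ∀ a ∈ l, ∀ u : H, ∃ v, ∃ _ : v ∈ T.adjoint.domain,
      aap T.adjoint v = u + a • v := by
    intro a ha u
    have hdpow : ((starRingEnd ℂ) a) ^ (m + 1) = μ := by
      rw [← map_pow, hroot a ha, Complex.conj_conj]
    have h := adj_solv hdense hclos hB1 hB2 hB3 hdpow u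
    rwa [Complex.conj_conj] at h
  intro u
  obtain ⟨x, hx, hxeq⟩ := solv_chain T.adjoint l hsol u
  rw [hlen] at hx
  have hprod : ((l.map fun a => X - C a).prod) = p := by
    calc (l.map fun a => X - C a).prod
        = (Multiset.map (fun a => X - C a) p.roots).prod := by
          rw [hl, ← Multiset.coe_toList p.roots, Multiset.map_coe, Multiset.prod_coe,
            Multiset.coe_toList]
      _ = p := (hsplits.eq_prod_roots_of_monic hmonic).symm
  rw [hlen, hprod] at hxeq
  refine ⟨x, hx, ?_⟩
  rw [← hxeq, hp, peval_X_pow_sub_C hx]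

end AdjSolv

theorem pairF {T : H →ₗ.[ℂ] H} (hdense : Dense (T.domain : Set H)) (k : ℕ) :
    ∀ (x y : H), x ∈ (T.pPow k).domain → y ∈ (T.adjoint.pPow k).domain →
      ⟪aap (T.pPow k) x, y⟫ = ⟪x, aap (T.adjoint.pPow k) y⟫ := by
  induction k with
  | zero =>
    intro x y _ _
    rw [aap_pPow_zero, aap_pPow_zero]
  | succ k ih =>
    intro x y hx hy
    obtain ⟨hx1, hx2⟩ := mem_pPow_succ.mp hx
    obtain ⟨hy1, hy2⟩ := mem_pPow_succ'.mp hy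
    rw [aap_pPow_succ hx, aap_pPow_succ' hy]
    have hfa := (adjoint_isFormalAdjoint hdense).symm
    have h1 : ⟪aap T (aap (T.pPow k) x), y⟫ = ⟪aap (T.pPow k) x, aap T.adjoint y⟫ := by
      have h := hfa ⟨aap (T.pPow k) x, hx2⟩ ⟨y, hy1⟩
      rw [aap_of_mem (f := T) hx2, aap_of_mem (f := T.adjoint) hy1]
      exact h
    rw [h1]
    exact ih _ _ hx1 hy2

end LinearPMap

end Aux6
section Aux7

open Polynomial Finset

variable {H : Type*} [NormedAddCommGroup H] [InnerProductSpace ℂ H] [CompleteSpace H]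

local notation "⟪" x ", " y "⟫" => @inner ℂ _ _ x y

namespace LinearPMap

theorem backward_main {T : H →ₗ.[ℂ] H} {m : ℕ} {μ : ℂ}
    (hdense : Dense (T.domain : Set H)) (hclos : T.IsClosable)
    (hTn : Dense (((T.pPow (m + 1)).domain : Submodule ℂ H) : Set H))
    (heq : T.pPow (m + 1) = T.adjoint.pPow (m + 1))
    (hinv : ((T.pPow (m + 1)).subConst μ).IsBddInvertible) :
    (T.pPow (m + 1)).adjoint = T.pPow (m + 1) := by
  obtain ⟨B, hB1, hB2, hB3⟩ := isBddInvertible_unpack hinv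
  set A := T.pPow (m + 1) with hA
  -- A is symmetric
  have hsymA : A.IsFormalAdjoint A := by
    intro x y
    have hy' : (y : H) ∈ (T.adjoint.pPow (m + 1)).domain := by rw [← heq]; exact y.2
    have hp := pairF hdense (m + 1) (x : H) (y : H) x.2 hy'
    rw [aap_of_mem x.2] at hp
    have hval : aap (T.adjoint.pPow (m + 1)) (y : H) = A y := by
      rw [← heq]
      exact aap_of_mem y.2
    rw [hval] at hp
    exact hp
  have hle : A ≤ A.adjoint := hsymA.le_adjoint hTn
  -- injectivity of A† - conj μ
  have hinj : ∀ z, z ∈ A.adjoint.domain → aap A.adjoint z = (starRingEnd ℂ μ) • z → z = 0 := by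
    intro z hz he
    have hfa := adjoint_isFormalAdjoint hTn
    have hall : ∀ u : H, ⟪z, u⟫ = 0 := by
      intro u
      have hx : B u ∈ A.domain := hB1 u
      have h1 : ⟪aap A.adjoint z, B u⟫ = ⟪z, A ⟨B u, hx⟩⟫ := by
        have h := hfa ⟨z, hz⟩ ⟨B u, hx⟩
        rw [aap_of_mem hz]
        exact h
      rw [he, inner_smul_left, Complex.conj_conj] at h1
      -- h1 : μ * ⟪z, B u⟫ = ⟪z, A ⟨B u, hx⟩⟫
      have h3 : ⟪z, u⟫ = ⟪z, aap A (B u)⟫ - μ * ⟪z, B u⟫ := by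
        conv_lhs => rw [← hB2 u]
        rw [inner_sub_right, inner_smul_right]
      rw [aap_of_mem hx, ← h1] at h3
      rw [h3, sub_self]
    have := hall z
    rwa [inner_self_eq_zero] at this
  -- surjectivity of (A - conj μ) via the adjoint side
  have hsurj := K_surj hdense hclos hB1 hB2 hB3
  -- every element of dom A† is in dom A with matching value
  have hclaim : ∀ z, z ∈ A.adjoint.domain → z ∈ A.domain ∧ aap A.adjoint z = aap A z := by
    intro z hz
    obtain ⟨x, hx, hxe⟩ := hsurj (aap A.adjoint z - (starRingEnd ℂ μ) • z)
    have hxA : x ∈ A.domain := by rw [heq]; exact hx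
    have hxval : aap A x = aap (T.adjoint.pPow (m + 1)) x := by rw [heq]
    have hxadj : x ∈ A.adjoint.domain := hle.1 hxA
    have hagree : aap A.adjoint x = aap A x := aap_le_agree hle hxA
    have h6 : aap (T.adjoint.pPow (m + 1)) x
        = aap A.adjoint z - (starRingEnd ℂ μ) • z + (starRingEnd ℂ μ) • x :=
      sub_eq_iff_eq_add.mp hxe
    have hδ : aap A.adjoint (z - x) = (starRingEnd ℂ μ) • (z - x) := by
      rw [aap_sub hz hxadj, hagree, hxval, h6, smul_sub]
      abel
    have h0 := hinj (z - x) (sub_mem hz hxadj) hδ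
    have hzx : z = x := by rwa [sub_eq_zero] at h0
    subst hzx
    exact ⟨hxA, hagree⟩
  have hle2 : A.adjoint ≤ A := by
    refine ⟨fun z hz => (hclaim z hz).1, ?_⟩
    intro a b hab
    have h1 : A.adjoint a = aap A.adjoint (a : H) := (aap_of_mem a.2).symm
    have h2 : A b = aap A (b : H) := (aap_of_mem b.2).symm
    rw [h1, h2, (hclaim (a : H) a.2).2, hab]
  exact le_antisymm hle2 hle

end LinearPMap

end Aux7
section Aux8

open Polynomial Finset

variable {H : Type*} [NormedAddCommGroup H] [InnerProductSpace ℂ H] [CompleteSpace H]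

local notation "⟪" x ", " y "⟫" => @inner ℂ _ _ x y

namespace LinearPMap

theorem forward_main {T : H →ₗ.[ℂ] H} {m : ℕ}
    (hdense : Dense (T.domain : Set H)) (hclos : T.IsClosable)
    (hTn : Dense (((T.pPow (m + 1)).domain : Submodule ℂ H) : Set H))
    (Hsa : (T.pPow (m + 1)).adjoint = T.pPow (m + 1)) :
    T.pPow (m + 1) = T.adjoint.pPow (m + 1) ∧ (T.pPow (m + 1)).pSpectrum ≠ Set.univ := by
  set A := T.pPow (m + 1) with hA
  have hAdom : A.adjoint.domain = A.domain := congrArg domain Hsa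
  have haap : ∀ y, aap A.adjoint y = aap A y := fun y => by rw [Hsa]
  have hfa := adjoint_isFormalAdjoint hTn
  -- symmetry of A
  have hsym : ∀ x y, x ∈ A.domain → y ∈ A.domain → ⟪aap A x, y⟫ = ⟪x, aap A y⟫ := by
    intro x y hx hy
    have hx' : x ∈ A.adjoint.domain := by rw [hAdom]; exact hx
    have h := hfa ⟨x, hx'⟩ ⟨y, hy⟩
    rw [← aap_of_mem hx', haap, ← aap_of_mem hy] at h
    exact h
  -- no nonreal eigenvalues
  have hker : ∀ ν : ℂ, ν.im ≠ 0 → ∀ z, z ∈ A.domain → aap A z = ν • z → z = 0 := by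
    intro ν hν z hz he
    by_contra hz0
    have h1 : ⟪aap A z, z⟫ = (starRingEnd ℂ) ν * ⟪z, z⟫ := by rw [he, inner_smul_left]
    have h2 : ⟪aap A z, z⟫ = ν * ⟪z, z⟫ := by rw [hsym z z hz hz, he, inner_smul_right]
    have h3 : (⟪z, z⟫ : ℂ) ≠ 0 := by rwa [ne_eq, inner_self_eq_zero]
    have h4 := mul_right_cancel₀ h3 (h1.symm.trans h2)
    rw [Complex.conj_eq_iff_im] at h4
    exact hν h4
  -- sequential closedness of A
  have hclosedseq : ∀ (v : ℕ → H), (∀ k, v k ∈ A.domain) → ∀ x w,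
      Filter.Tendsto (fun k => v k) Filter.atTop (nhds x) →
      Filter.Tendsto (fun k => aap A (v k)) Filter.atTop (nhds w) →
      x ∈ A.domain ∧ aap A x = w := by
    intro v hv x w hx hw
    have hpair : ∀ b : A.domain, ⟪w, (b : H)⟫ = ⟪x, A b⟫ := by
      intro b
      have h1 : ∀ k, ⟪aap A (v k), (b : H)⟫ = ⟪v k, A b⟫ := fun k => by
        rw [hsym (v k) b (hv k) b.2, aap_of_mem b.2]
      have t1 : Filter.Tendsto (fun k => ⟪aap A (v k), (b : H)⟫) Filter.atTop
          (nhds ⟪w, (b : H)⟫) := hw.inner tendsto_const_nhds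
      have t2 : Filter.Tendsto (fun k => ⟪(v k : H), A b⟫) Filter.atTop
          (nhds ⟪x, A b⟫) := hx.inner tendsto_const_nhds
      simp only [h1] at t1
      exact tendsto_nhds_unique t1 t2
    have hmem : x ∈ A.adjoint.domain := mem_adjoint_domain_of_exists x ⟨w, hpair⟩
    have hval : A.adjoint ⟨x, hmem⟩ = w := adjoint_apply_eq hTn ⟨x, hmem⟩ hpair
    refine ⟨by rw [← hAdom]; exact hmem, ?_⟩
    rw [← haap, aap_of_mem hmem, hval]
  -- the operator e = A - I
  set e : A.domain →ₗ[ℂ] H := A.toFun - Complex.I • A.domain.subtype with he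
  have he_apply : ∀ x : A.domain, e x = A x - Complex.I • (x : H) := fun x => rfl
  have hreal : ∀ x : A.domain, (⟪A x, (x : H)⟫ : ℂ).im = 0 := by
    intro x
    have hs := hsym (x : H) (x : H) x.2 x.2
    rw [aap_of_mem x.2] at hs
    have hc : (starRingEnd ℂ) ⟪A x, (x : H)⟫ = ⟪A x, (x : H)⟫ := by
      rw [inner_conj_symm]
      exact hs.symm
    exact Complex.conj_eq_iff_im.mp hc
  have hnorm : ∀ x : A.domain, ‖e x‖ ^ 2 = ‖A x‖ ^ 2 + ‖(x : H)‖ ^ 2 := by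
    intro x
    rw [he_apply]
    rw [@norm_sub_sq ℂ]
    have h1 : (RCLike.re (⟪A x, Complex.I • (x : H)⟫ : ℂ) : ℝ) = 0 := by
      rw [inner_smul_right]
      have := hreal x
      simp [RCLike.re_to_complex, Complex.mul_re, Complex.I_re, Complex.I_im, this]
    rw [h1]
    have h2 : ‖Complex.I • (x : H)‖ = ‖(x : H)‖ := by
      rw [norm_smul, Complex.norm_I, one_mul]
    rw [h2]
    ring
  have hlow : ∀ x : A.domain, ‖(x : H)‖ ≤ ‖e x‖ := by
    intro x
    have h := hnorm x
    by_contra hcon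
    push_neg at hcon
    nlinarith [norm_nonneg (e x), norm_nonneg (A x), norm_nonneg ((x : H))]
  have hinj : Function.Injective e := by
    intro a b hab
    have h1 : e (a - b) = 0 := by rw [show e (a - b) = e a - e b from e.map_sub a b, hab, sub_self]
    have h2 := hlow (a - b)
    rw [h1, norm_zero] at h2
    have h3 : ((a - b : A.domain) : H) = 0 := norm_le_zero_iff.mp h2
    have h4 : (a : H) - (b : H) = 0 := h3
    exact Subtype.ext (sub_eq_zero.mp h4)
  -- the range of e is closed
  have hMclosed : _root_.IsClosed ((LinearMap.range e : Submodule ℂ H) : Set H) := by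
    apply IsSeqClosed.isClosed
    intro f u hf hfu
    have hfx : ∀ k, ∃ x : A.domain, e x = f k := fun k => hf k
    choose xs hxs using hfx
    have hcauchy : CauchySeq (fun k => (xs k : H)) := by
      have hfc : CauchySeq f := hfu.cauchySeq
      rw [Metric.cauchySeq_iff] at hfc ⊢
      intro ε hε
      obtain ⟨N, hN⟩ := hfc ε hε
      refine ⟨N, fun p hp q hq => ?_⟩
      have hd := hN p hp q hq
      rw [dist_eq_norm] at hd ⊢
      calc ‖(xs p : H) - (xs q : H)‖ = ‖((xs p - xs q : A.domain) : H)‖ := rfl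
        _ ≤ ‖e (xs p - xs q)‖ := hlow _
        _ = ‖f p - f q‖ := by rw [show e (xs p - xs q) = e (xs p) - e (xs q) from e.map_sub _ _, hxs p, hxs q]
        _ < ε := hd
    obtain ⟨x, hxlim⟩ := cauchySeq_tendsto_of_complete hcauchy
    have hAseq : Filter.Tendsto (fun k => aap A ((xs k : H))) Filter.atTop
        (nhds (u + Complex.I • x)) := by
      have heqk : ∀ k, aap A ((xs k : H)) = f k + Complex.I • ((xs k : H)) := fun k => by
        rw [aap_of_mem (xs k).2]
        have h5 : A (xs k) - Complex.I • ((xs k : H)) = f k := by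
          rw [← he_apply, hxs k]
        exact sub_eq_iff_eq_add.mp h5
      simp only [heqk]
      exact hfu.add (hxlim.const_smul _)
    obtain ⟨hxdom, hxval⟩ := hclosedseq (fun k => (xs k : H)) (fun k => (xs k).2) x
      (u + Complex.I • x) hxlim hAseq
    refine ⟨⟨x, hxdom⟩, ?_⟩
    rw [he_apply, ← aap_of_mem hxdom, hxval]
    abel
  -- the range of e is all of H
  have hMtop : LinearMap.range e = ⊤ := by
    haveI := hMclosed.completeSpace_coe
    rw [← Submodule.orthogonal_eq_bot_iff, Submodule.eq_bot_iff]
    intro z hz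
    have hz' : ∀ x : A.domain, (⟪A x - Complex.I • (x : H), z⟫ : ℂ) = 0 := by
      intro x
      have := (Submodule.mem_orthogonal _ z).mp hz (e x) (LinearMap.mem_range_self e x)
      rwa [he_apply] at this
    have hpair : ∀ x : A.domain, ⟪(-Complex.I) • z, (x : H)⟫ = ⟪z, A x⟫ := by
      intro x
      have h := hz' x
      rw [inner_sub_left, sub_eq_zero] at h
      -- h : ⟪A x, z⟫ = ⟪I • x, z⟫
      have h2 : (⟪z, A x⟫ : ℂ) = Complex.I * ⟪z, (x : H)⟫ := by
        have hc1 : (⟪z, A x⟫ : ℂ) = (starRingEnd ℂ) ⟪A x, z⟫ := (inner_conj_symm _ _).symm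
        rw [hc1, h, inner_smul_left, map_mul, Complex.conj_conj, inner_conj_symm]
      rw [h2, inner_smul_left]
      simp [map_neg, Complex.conj_I]
    have hmem : z ∈ A.adjoint.domain := mem_adjoint_domain_of_exists z ⟨_, hpair⟩
    have hval : A.adjoint ⟨z, hmem⟩ = (-Complex.I) • z := adjoint_apply_eq hTn ⟨z, hmem⟩ hpair
    have hz0 : aap A z = (-Complex.I) • z := by
      rw [← haap, aap_of_mem hmem, hval]
    exact hker (-Complex.I) (by simp) z (by rw [← hAdom]; exact hmem) hz0
  -- bounded inverse
  set einv := LinearEquiv.ofBijective e ⟨hinj, LinearMap.range_eq_top.mp hMtop⟩ with heinv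
  have heinv_app : ∀ x : A.domain, einv x = e x := fun x => rfl
  set Bl : H →ₗ[ℂ] H := A.domain.subtype ∘ₗ (einv.symm : H →ₗ[ℂ] A.domain) with hBl
  have hBl_app : ∀ u, Bl u = ((einv.symm u : A.domain) : H) := fun u => rfl
  have hBl_bound : ∀ u, ‖Bl u‖ ≤ 1 * ‖u‖ := by
    intro u
    rw [one_mul, hBl_app]
    calc ‖((einv.symm u : A.domain) : H)‖ ≤ ‖e (einv.symm u)‖ := hlow _
      _ = ‖u‖ := by rw [← heinv_app, einv.apply_symm_apply]
  set B : H →L[ℂ] H := Bl.mkContinuous 1 hBl_bound with hB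
  have hB_app : ∀ u, B u = ((einv.symm u : A.domain) : H) := fun u => rfl
  have hB1 : ∀ u, B u ∈ A.domain := fun u => by rw [hB_app]; exact (einv.symm u).2
  have hB2 : ∀ u, aap A (B u) - Complex.I • B u = u := by
    intro u
    rw [hB_app, aap_of_mem (einv.symm u).2]
    have h5 : e (einv.symm u) = u := by rw [← heinv_app, einv.apply_symm_apply]
    have h7 := he_apply (einv.symm u)
    exact h7.symm.trans h5
  have hB3 : ∀ x, x ∈ A.domain → B (aap A x - Complex.I • x) = x := by
    intro x hx
    have h5 : aap A x - Complex.I • x = e ⟨x, hx⟩ := by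
      rw [he_apply, aap_of_mem hx]
    rw [h5, hB_app, ← heinv_app, einv.symm_apply_apply]
  -- I is not in the spectrum
  have hinvI : (A.subConst Complex.I).IsBddInvertible := by
    refine ⟨B, fun y => ⟨hB1 y, ?_⟩, fun x => ?_⟩
    · rw [subConst_apply A Complex.I (hB1 y), ← aap_of_mem (hB1 y)]
      exact hB2 y
    · have hx : (x : H) ∈ A.domain := x.2
      rw [subConst_apply A Complex.I hx, ← aap_of_mem hx]
      exact hB3 (x : H) hx
  have hspec : A.pSpectrum ≠ Set.univ := by
    intro hcontra
    have h6 : Complex.I ∈ A.pSpectrum := by rw [hcontra]; exact Set.mem_univ _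
    exact h6 hinvI
  -- now prove A = T†^(m+1)
  have hsurj := K_surj hdense hclos hB1 hB2 hB3
  have hpowle : T.adjoint.pPow (m + 1) ≤ A := by
    have hfa2 : (T.pPow (m + 1)).IsFormalAdjoint (T.adjoint.pPow (m + 1)) := by
      intro x y
      have h := pairF hdense (m + 1) (x : H) (y : H) x.2 y.2
      rw [aap_of_mem x.2, aap_of_mem y.2] at h
      exact h
    have h := hfa2.le_adjoint hTn
    rwa [Hsa] at h
  have hclaim : ∀ x, x ∈ A.domain → x ∈ (T.adjoint.pPow (m + 1)).domain ∧
      aap A x = aap (T.adjoint.pPow (m + 1)) x := by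
    intro x hx
    obtain ⟨y, hy, hye⟩ := hsurj (aap A x + Complex.I • x)
    have hyA : y ∈ A.domain := hpowle.1 hy
    have hagree : aap A y = aap (T.adjoint.pPow (m + 1)) y := aap_le_agree hpowle hy
    rw [Complex.conj_I] at hye
    have h5 : aap A y + Complex.I • y = aap A x + Complex.I • x := by
      rw [hagree]
      rw [neg_smul, sub_neg_eq_add] at hye
      exact hye
    have h7 : aap A x = aap A y + Complex.I • y - Complex.I • x := by
      rw [h5]; abel
    have hδ : aap A (x - y) = (-Complex.I) • (x - y) := by
      rw [aap_sub hx hyA, h7, neg_smul, smul_sub]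
      abel
    have h0 := hker (-Complex.I) (by simp) (x - y) (sub_mem hx hyA) hδ
    have hxy : x = y := by rwa [sub_eq_zero] at h0
    subst hxy
    exact ⟨hy, hagree⟩
  have hAle : A ≤ T.adjoint.pPow (m + 1) := by
    refine ⟨fun x hx => (hclaim x hx).1, ?_⟩
    intro a b hab
    have h1 : A a = aap A (a : H) := (aap_of_mem a.2).symm
    have h2 : (T.adjoint.pPow (m + 1)) b = aap (T.adjoint.pPow (m + 1)) (b : H) :=
      (aap_of_mem b.2).symm
    rw [h1, h2, (hclaim (a : H) a.2).2, hab]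
  exact ⟨le_antisymm hAle hpowle, hspec⟩

end LinearPMap

end Aux8

/-- `Tⁿ` is self-adjoint iff `Tⁿ = (T*)ⁿ` and `σ(Tⁿ) ≠ ℂ`. -/
theorem statement_8 {H : Type*} [NormedAddCommGroup H] [InnerProductSpace ℂ H] [CompleteSpace H]
    (n : ℕ) (hn : 1 ≤ n)
    (T : H →ₗ.[ℂ] H) (hdense : Dense (T.domain : Set H)) (hclosable : T.IsClosable)
    (hTn : Dense ((T.pPow n).domain : Set H)) :
    (T.pPow n).adjoint = T.pPow n ↔
      (T.pPow n = T.adjoint.pPow n ∧ (T.pPow n).pSpectrum ≠ Set.univ) := by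
  obtain ⟨m, rfl⟩ : ∃ m, n = m + 1 := ⟨n - 1, by omega⟩
  constructor
  · intro Hsa
    exact LinearPMap.forward_main hdense hclosable hTn Hsa
  · rintro ⟨heq, hspec⟩
    obtain ⟨μ, hμ⟩ := (Set.ne_univ_iff_exists_notMem _).mp hspec
    have hinv : ((T.pPow (m + 1)).subConst μ).IsBddInvertible := not_not.mp hμ
    exact LinearPMap.backward_main hdense hclosable hTn heq hinv
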